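/- An n-step staircase C = C₁ ∪ ... ∪ C_n is closed under componentwise minimum (intersection): if A, B ∈ C then (min(x_A,x_B), min(y_A,y_B), min(z_A,z_B)) ∈ C. Hence an n-step staircase is a poset poly-antimatroid. -/
import Mathlib


/-- Accessibility (A1) for a set of points in `ℕ³`: every nonzero point of `C`
has a point of `C` obtained by decrementing one coordinate. -/
def Accessible3 (C : Set (ℕ × ℕ × ℕ)) : Prop :=
  ∀ p ∈ C, p ≠ (0, 0, 0) →
    (1 ≤ p.1 ∧ (p.1 - 1, p.2.1, p.2.2) ∈ C) ∨
    (1 ≤ p.2.1 ∧ (p.1, p.2.1 - 1, p.2.2) ∈ C) ∨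
    (1 ≤ p.2.2 ∧ (p.1, p.2.1, p.2.2 - 1) ∈ C)

/-- Componentwise maximum (multiset union) of two points of `ℕ³`. -/
def sup3 (a b : ℕ × ℕ × ℕ) : ℕ × ℕ × ℕ :=
  (max a.1 b.1, max a.2.1 b.2.1, max a.2.2 b.2.2)

/-- Componentwise minimum (multiset intersection) of two points of `ℕ³`. -/
def inf3 (a b : ℕ × ℕ × ℕ) : ℕ × ℕ × ℕ :=
  (min a.1 b.1, min a.2.1 b.2.1, min a.2.2 b.2.2)

/-- Componentwise order on points of `ℕ³`. -/
def le3 (a b : ℕ × ℕ × ℕ) : Prop :=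
  a.1 ≤ b.1 ∧ a.2.1 ≤ b.2.1 ∧ a.2.2 ≤ b.2.2

/-- The digital cuboid with minimum corner `a` and maximum corner `b`. -/
def Cuboid (a b : ℕ × ℕ × ℕ) : Set (ℕ × ℕ × ℕ) :=
  {p | a.1 ≤ p.1 ∧ p.1 ≤ b.1 ∧ a.2.1 ≤ p.2.1 ∧ p.2.1 ≤ b.2.1 ∧
       a.2.2 ≤ p.2.2 ∧ p.2.2 ≤ b.2.2}

/-- `lo 0, hi 0`, ..., `lo (n-1), hi (n-1)` are the corners of a regular
sequence of `n` digital cuboids. -/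
def RegularSeq (n : ℕ) (lo hi : ℕ → ℕ × ℕ × ℕ) : Prop :=
  1 ≤ n ∧ lo 0 = (0, 0, 0) ∧
  (∀ i < n, le3 (lo i) (hi i) ∧ lo i ≠ hi i) ∧
  (∀ i, i + 1 < n →
    (le3 (lo i) (lo (i + 1)) ∧ lo i ≠ lo (i + 1)) ∧
    le3 (lo (i + 1)) (hi i) ∧
    (le3 (hi i) (hi (i + 1)) ∧ hi i ≠ hi (i + 1)))

/-- The `n`-step staircase determined by a (regular) sequence of cuboids. -/
def Staircase (n : ℕ) (lo hi : ℕ → ℕ × ℕ × ℕ) : Set (ℕ × ℕ × ℕ) :=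
  {p | ∃ i < n, p ∈ Cuboid (lo i) (hi i)}


lemma le3_refl (a : ℕ × ℕ × ℕ) : le3 a a := ⟨le_refl _, le_refl _, le_refl _⟩

lemma le3_trans {a b c : ℕ × ℕ × ℕ} (h1 : le3 a b) (h2 : le3 b c) : le3 a c := by
  obtain ⟨x1, y1, z1⟩ := h1; obtain ⟨x2, y2, z2⟩ := h2
  exact ⟨le_trans x1 x2, le_trans y1 y2, le_trans z1 z2⟩

lemma lo_mono (n : ℕ) (lo hi : ℕ → ℕ × ℕ × ℕ) (hreg : RegularSeq n lo hi) :
    ∀ j, j < n → ∀ i, i ≤ j → le3 (lo i) (lo j) := by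
  intro j
  induction j with
  | zero =>
    intro _ i hij
    interval_cases i
    exact le3_refl _
  | succ j ih =>
    intro hj i hij
    rcases Nat.lt_or_ge i (j + 1) with h | h
    · have hstep := (hreg.2.2.2 j hj).1.1
      exact le3_trans (ih (lt_trans (Nat.lt_succ_self j) hj) i (Nat.lt_succ_iff.mp h)) hstep
    · have : i = j + 1 := le_antisymm hij h
      subst this; exact le3_refl _

theorem staircase_closed_under_intersection (n : ℕ) (lo hi : ℕ → ℕ × ℕ × ℕ)
    (hreg : RegularSeq n lo hi) :
    ∀ a ∈ Staircase n lo hi, ∀ b ∈ Staircase n lo hi,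
      inf3 a b ∈ Staircase n lo hi := by
  rintro a ⟨i, hin, ha⟩ b ⟨j, hjn, hb⟩
  rcases le_total i j with hij | hij
  · refine ⟨i, hin, ?_⟩
    have hmono := lo_mono n lo hi hreg j hjn i hij
    obtain ⟨a1, a2, a3, a4, a5, a6⟩ := ha
    obtain ⟨b1, b2, b3, b4, b5, b6⟩ := hb
    obtain ⟨m1, m2, m3⟩ := hmono
    exact ⟨le_min a1 (le_trans m1 b1), le_trans (min_le_left _ _) a2,
      le_min a3 (le_trans m2 b3), le_trans (min_le_left _ _) a4,
      le_min a5 (le_trans m3 b5), le_trans (min_le_left _ _) a6⟩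
  · refine ⟨j, hjn, ?_⟩
    have hmono := lo_mono n lo hi hreg i hin j hij
    obtain ⟨a1, a2, a3, a4, a5, a6⟩ := ha
    obtain ⟨b1, b2, b3, b4, b5, b6⟩ := hb
    obtain ⟨m1, m2, m3⟩ := hmono
    exact ⟨le_min (le_trans m1 a1) b1, le_trans (min_le_right _ _) b2,
      le_min (le_trans m2 a3) b3, le_trans (min_le_right _ _) b4,
      le_min (le_trans m3 a5) b5, le_trans (min_le_right _ _) b6⟩
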